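/- Let G be a generic two-by-two game and let (ν,μ) be a mixed-strategy Nash equilibrium of G^Q. Then ν is equivalent to a Dirac measure concentrated at a single unit quaternion if and only if μ is equivalent to a Dirac measure concentrated at a single unit quaternion. -/

import Mathlib

noncomputable section

open MeasureTheory

local notation "ℍ" => Quaternion ℝ

instance : MeasurableSpace (Quaternion ℝ) := borel _
instance : BorelSpace (Quaternion ℝ) := ⟨rfl⟩

/-- The four real coordinates of a quaternion: `p = π₁(p) + π₂(p)i + π₃(p)j + π₄(p)k`. -/
def piQ (t : Fin 4) (p : ℍ) : ℝ := ![p.re, p.imI, p.imJ, p.imK] t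

/-- The standard inner product on ℍ ≅ ℝ⁴. -/
def qinner (p q : ℍ) : ℝ := ∑ t : Fin 4, piQ t p * piQ t q

/-- The quaternions `i`, `j`, `k`. -/
def qI : ℍ := ⟨0, 1, 0, 0⟩
def qJ : ℍ := ⟨0, 0, 1, 0⟩
def qK : ℍ := ⟨0, 0, 0, 1⟩

/-- A mixed quantum strategy: a Borel probability measure on the unit quaternions. -/
def IsMixed (μ : Measure ℍ) : Prop :=
  IsProbabilityMeasure μ ∧ μ {p : ℍ | ‖p‖ = 1} = 1

/-- Quantum payoff with payoff vector `X`: `P^Q(p,q) = Σ_t π_t(pq)² X_t`. -/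
def payoff (X : Fin 4 → ℝ) (p q : ℍ) : ℝ :=
  ∑ t : Fin 4, (piQ t (p * q)) ^ 2 * X t

/-- Expected payoff of a pair of mixed strategies. -/
def payoffM (X : Fin 4 → ℝ) (ν μ : Measure ℍ) : ℝ :=
  ∫ p, ∫ q, payoff X p q ∂μ ∂ν

/-- Mixed-strategy Nash equilibrium of the quantum game with payoff vectors `X`, `Y`. -/
def IsNash (X Y : Fin 4 → ℝ) (ν μ : Measure ℍ) : Prop :=
  IsMixed ν ∧ IsMixed μ ∧
    (∀ ν' : Measure ℍ, IsMixed ν' → payoffM X ν' μ ≤ payoffM X ν μ) ∧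
    (∀ μ' : Measure ℍ, IsMixed μ' → payoffM Y ν μ' ≤ payoffM Y ν μ)

/-- Equivalence of mixed quantum strategies. -/
def StratEquiv (μ μ' : Measure ℍ) : Prop :=
  ∀ p : ℍ, ‖p‖ = 1 → ∀ t : Fin 4,
    ∫ q, (piQ t (p * q)) ^ 2 ∂μ = ∫ q, (piQ t (p * q)) ^ 2 ∂μ'

/-- Equivalence of pairs of mixed strategies: `(ν,μ) ∼ (ν',μ')` iff there is a unit
quaternion `u` with `ν' ∼ ν·u` and `μ' ∼ u⁻¹·μ`. -/
def PairEquiv (ν μ ν' μ' : Measure ℍ) : Prop :=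
  ∃ u : ℍ, ‖u‖ = 1 ∧
    StratEquiv (Measure.map (fun p => p * u) ν) ν' ∧
    StratEquiv (Measure.map (fun q => u⁻¹ * q) μ) μ'

/-- A generic two-by-two game: all payoffs distinct and all pairwise sums distinct. -/
def Generic (X Y : Fin 4 → ℝ) : Prop :=
  Function.Injective X ∧ Function.Injective Y ∧
    (∀ s t s' t' : Fin 4, s < t → s' < t' → X s + X t = X s' + X t' → s = s' ∧ t = t') ∧
    (∀ s t s' t' : Fin 4, s < t → s' < t' → Y s + Y t = Y s' + Y t' → s = s' ∧ t = t')

/-- `K(p) = π₁(p)π₂(p)π₃(p)π₄(p)`. -/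
def K (p : ℍ) : ℝ := p.re * p.imI * p.imJ * p.imK

/-- Intertwined quadruple of quaternions. -/
def Intertwined (p q r s : ℍ) : Prop :=
  ∃ α : ℝ, α ≠ 0 ∧ ∀ X Y : ℝ, α * K (X • p + Y • q) = K (X • r + Y • s)

/-- Fully intertwined quadruple of quaternions. -/
def FullyIntertwined (p q r s : ℍ) : Prop :=
  Intertwined p q r s ∧ Intertwined p r q s

/-- `p` is an optimal response for Player One to the mixed strategy `μ`. -/
def Optimal₁ (X : Fin 4 → ℝ) (μ : Measure ℍ) (p : ℍ) : Prop :=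
  ‖p‖ = 1 ∧ ∀ p' : ℍ, ‖p'‖ = 1 → ∫ q, payoff X p' q ∂μ ≤ ∫ q, payoff X p q ∂μ

/-- `q` is an optimal response for Player Two to the mixed strategy `ν`. -/
def Optimal₂ (Y : Fin 4 → ℝ) (ν : Measure ℍ) (q : ℍ) : Prop :=
  ‖q‖ = 1 ∧ ∀ q' : ℍ, ‖q'‖ = 1 → ∫ p, payoff Y p q' ∂ν ≤ ∫ p, payoff Y p q ∂ν
-- Auxiliary lemmas

-- aux
def eQ : Fin 4 → ℍ := ![1, qI, qJ, qK]

lemma piQ_cont (t : Fin 4) : Continuous (piQ t) := by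
  fin_cases t <;> simp [piQ] <;>
    first
    | exact Quaternion.continuous_re
    | exact Quaternion.continuous_imI
    | exact Quaternion.continuous_imJ
    | exact Quaternion.continuous_imK

lemma piQ_neg (t : Fin 4) (x : ℍ) : piQ t (-x) = - piQ t x := by
  fin_cases t <;> simp [piQ]

lemma sum_piQ_sq (x : ℍ) : ∑ t : Fin 4, piQ t x ^ 2 = ‖x‖ ^ 2 := by
  have h := Quaternion.normSq_eq_norm_mul_self x
  rw [Quaternion.normSq_def'] at h
  simp only [Fin.sum_univ_four, piQ, sq]
  simp only [Matrix.cons_val_zero, Matrix.cons_val_one, Matrix.head_cons,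
    Matrix.cons_val_two, Matrix.tail_cons, Matrix.cons_val_three]
  linarith

lemma norm_eQ (t : Fin 4) : ‖eQ t‖ = 1 := by
  have : ∀ y : ℍ, ‖y‖ ^ 2 = 1 → ‖y‖ = 1 := by
    intro y hy
    nlinarith [norm_nonneg y]
  fin_cases t <;>
  · apply this
    rw [← sum_piQ_sq]
    simp [Fin.sum_univ_four, piQ, eQ, qI, qJ, qK, Quaternion.re_one, Quaternion.imI_one, Quaternion.imJ_one, Quaternion.imK_one]

lemma payoff_neg_left (X : Fin 4 → ℝ) (p q : ℍ) : payoff X (-p) q = payoff X p q := by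
  unfold payoff
  congr 1; funext t; rw [neg_mul, piQ_neg]; ring

lemma payoff_neg_right (X : Fin 4 → ℝ) (p q : ℍ) : payoff X p (-q) = payoff X p q := by
  unfold payoff
  congr 1; funext t; rw [mul_neg, piQ_neg]; ring

lemma eq_pm_eQ (x : ℍ) (t0 : Fin 4) (h1 : ‖x‖ = 1)
    (h : ∀ t, t ≠ t0 → piQ t x = 0) : x = eQ t0 ∨ x = - eQ t0 := by
  have hs : piQ t0 x ^ 2 = 1 := by
    have htot := sum_piQ_sq x
    rw [h1, one_pow, Fin.sum_univ_four] at htot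
    fin_cases t0 <;> simp_all
  have hx : x = ⟨piQ 0 x, piQ 1 x, piQ 2 x, piQ 3 x⟩ := by
    ext <;> simp [piQ]
  have hv : piQ t0 x = 1 ∨ piQ t0 x = -1 := mul_self_eq_one_iff.mp (by nlinarith)
  rcases hv with hv | hv
  · left
    rw [hx]
    fin_cases t0 <;>
      [ rw [h 1 (by decide), h 2 (by decide), h 3 (by decide)];
        rw [h 0 (by decide), h 2 (by decide), h 3 (by decide)];
        rw [h 0 (by decide), h 1 (by decide), h 3 (by decide)];
        rw [h 0 (by decide), h 1 (by decide), h 2 (by decide)] ] <;>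
      (ext <;> simp [eQ, qI, qJ, qK, Quaternion.re_one, Quaternion.imI_one, Quaternion.imJ_one, Quaternion.imK_one]) <;> exact hv
  · right
    rw [hx]
    fin_cases t0 <;>
      [ rw [h 1 (by decide), h 2 (by decide), h 3 (by decide)];
        rw [h 0 (by decide), h 2 (by decide), h 3 (by decide)];
        rw [h 0 (by decide), h 1 (by decide), h 3 (by decide)];
        rw [h 0 (by decide), h 1 (by decide), h 2 (by decide)] ] <;>
      (ext <;> simp only [Quaternion.re_neg, Quaternion.imI_neg, Quaternion.imJ_neg, Quaternion.imK_neg] <;> simp [eQ, qI, qJ, qK, Quaternion.re_one, Quaternion.imI_one, Quaternion.imJ_one, Quaternion.imK_one]) <;> exact hv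

lemma sphere_measurable : MeasurableSet {p : ℍ | ‖p‖ = 1} :=
  (isClosed_eq continuous_norm continuous_const).measurableSet

lemma ae_sphere {μ : Measure ℍ} (hμ : IsMixed μ) : ∀ᵐ x ∂μ, ‖x‖ = 1 := by
  haveI := hμ.1
  rw [ae_iff]
  have : {x : ℍ | ¬ ‖x‖ = 1} = {p : ℍ | ‖p‖ = 1}ᶜ := rfl
  rw [this]
  exact (prob_compl_eq_zero_iff sphere_measurable).mpr hμ.2

lemma piQ_abs_le (t : Fin 4) (x : ℍ) : |piQ t x| ≤ ‖x‖ := by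
  have h : piQ t x ^ 2 ≤ ‖x‖ ^ 2 := by
    rw [← sum_piQ_sq x]
    exact Finset.single_le_sum (f := fun s => piQ s x ^ 2) (fun t _ => sq_nonneg _)
      (Finset.mem_univ t)
  nlinarith [abs_nonneg (piQ t x), norm_nonneg x, sq_abs (piQ t x)]

lemma integrable_of_mixed {μ : Measure ℍ} (hμ : IsMixed μ) {f : ℍ → ℝ} (hf : Continuous f)
    {C : ℝ} (hC : ∀ x, ‖x‖ = 1 → ‖f x‖ ≤ C) : Integrable f μ := by
  haveI := hμ.1
  refine ⟨hf.measurable.aestronglyMeasurable, HasFiniteIntegral.of_bounded (C := C) ?_⟩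
  filter_upwards [ae_sphere hμ] with x hx using hC x hx

lemma isMixed_dirac {p : ℍ} (hp : ‖p‖ = 1) : IsMixed (Measure.dirac p) := by
  refine ⟨inferInstance, ?_⟩
  rw [Measure.dirac_apply' _ sphere_measurable]
  simp [Set.indicator_of_mem, hp]

lemma cont_piQ_sq (t : Fin 4) (a : ℍ) : Continuous (fun r : ℍ => piQ t (a * r) ^ 2) :=
  (((piQ_cont t).comp (continuous_const.mul continuous_id)).pow 2)

lemma equiv_dirac_of_ae {ν : Measure ℍ} {p : ℍ} (hν : IsProbabilityMeasure ν)
    (h : ∀ᵐ r ∂ν, r = p ∨ r = -p) : StratEquiv ν (Measure.dirac p) := by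
  intro a _ t
  rw [integral_dirac]
  have hc : ∀ᵐ r ∂ν, piQ t (a * r) ^ 2 = piQ t (a * p) ^ 2 := by
    filter_upwards [h] with r hr
    rcases hr with h' | h' <;> rw [h']
    rw [mul_neg, piQ_neg]; ring
  rw [integral_congr_ae hc, integral_const]
  simp

lemma ae_of_equiv_dirac {ν : Measure ℍ} {p : ℍ} (hν : IsMixed ν) (hp : ‖p‖ = 1)
    (h : StratEquiv ν (Measure.dirac p)) : ∀ᵐ r ∂ν, r = p ∨ r = -p := by
  haveI := hν.1
  have hp0 : p ≠ 0 := by intro h0; rw [h0] at hp; simp at hp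
  have hpinv : ‖p⁻¹‖ = 1 := by rw [norm_inv, hp]; norm_num
  have key : ∀ t : Fin 4, t ≠ 0 → ∀ᵐ r ∂ν, piQ t (p⁻¹ * r) = 0 := by
    intro t ht
    have h1 := h p⁻¹ hpinv t
    rw [integral_dirac] at h1
    have hint : Integrable (fun r => piQ t (p⁻¹ * r) ^ 2) ν := by
      refine integrable_of_mixed hν (cont_piQ_sq t p⁻¹) (C := 1) ?_
      intro x hx
      have h2 : |piQ t (p⁻¹ * x)| ≤ 1 := by
        have := piQ_abs_le t (p⁻¹ * x)
        rw [norm_mul, hpinv, hx, one_mul] at this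
        exact this
      rw [Real.norm_eq_abs, abs_pow]
      nlinarith [abs_nonneg (piQ t (p⁻¹ * x))]
    have hz : ∫ r, piQ t (p⁻¹ * r) ^ 2 ∂ν = 0 := by
      rw [h1, inv_mul_cancel₀ hp0]
      fin_cases t <;> simp_all [piQ, Quaternion.re_one, Quaternion.imI_one, Quaternion.imJ_one, Quaternion.imK_one]
    have h3 := (integral_eq_zero_iff_of_nonneg_ae (ae_of_all _ fun r => sq_nonneg _) hint).mp hz
    filter_upwards [h3] with r hr
    exact pow_eq_zero_iff two_ne_zero |>.mp hr
  filter_upwards [key 1 (by decide), key 2 (by decide), key 3 (by decide), ae_sphere hν]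
    with r h1 h2 h3 hr
  have hn : ‖p⁻¹ * r‖ = 1 := by rw [norm_mul, hpinv, hr, one_mul]
  have hcomp : ∀ t : Fin 4, t ≠ 0 → piQ t (p⁻¹ * r) = 0 := by
    intro t ht
    fin_cases t
    · exact absurd rfl ht
    · exact h1
    · exact h2
    · exact h3
  have hr' : r = p * (p⁻¹ * r) := by rw [← mul_assoc, mul_inv_cancel₀ hp0, one_mul]
  rcases eq_pm_eQ _ 0 hn hcomp with h' | h'
  · left; rw [hr', h']; simp [eQ]
  · right; rw [hr', h']; simp [eQ]

lemma core (W : Fin 4 → ℝ) (hW : Function.Injective W) (t0 : Fin 4) (ht0 : ∀ t, W t ≤ W t0)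
    {μ : Measure ℍ} (hμ : IsMixed μ) (m : ℍ → ℍ) (hm : Continuous m)
    (hmn : ∀ x, ‖m x‖ = ‖x‖)
    (hint : W t0 ≤ ∫ x, (∑ t : Fin 4, piQ t (m x) ^ 2 * W t) ∂μ) :
    ∀ᵐ x ∂μ, m x = eQ t0 ∨ m x = - eQ t0 := by
  haveI := hμ.1
  set f : ℍ → ℝ := fun x => ∑ t : Fin 4, piQ t (m x) ^ 2 * W t with hf
  have hfc : Continuous f := by
    apply continuous_finset_sum
    exact fun t _ => (((piQ_cont t).comp hm).pow 2).mul continuous_const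
  have key : ∀ x, ‖x‖ = 1 → ∑ t : Fin 4, (W t0 - W t) * piQ t (m x) ^ 2 = W t0 - f x := by
    intro x hx
    have hsum : ∑ t : Fin 4, piQ t (m x) ^ 2 = 1 := by rw [sum_piQ_sq, hmn, hx, one_pow]
    have h1 : ∑ t : Fin 4, (W t0 - W t) * piQ t (m x) ^ 2 =
        W t0 * ∑ t : Fin 4, piQ t (m x) ^ 2 - ∑ t : Fin 4, piQ t (m x) ^ 2 * W t := by
      rw [Finset.mul_sum, ← Finset.sum_sub_distrib]
      exact Finset.sum_congr rfl fun t _ => by ring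
    rw [h1, hsum, hf]; ring
  have hfb : ∀ x, ‖x‖ = 1 → ‖f x‖ ≤ ∑ t : Fin 4, |W t| := by
    intro x hx
    have hsq : ∀ t : Fin 4, piQ t (m x) ^ 2 ≤ 1 := by
      intro t
      have := piQ_abs_le t (m x)
      rw [hmn, hx] at this
      nlinarith [abs_nonneg (piQ t (m x)), sq_abs (piQ t (m x))]
    rw [Real.norm_eq_abs]
    calc |f x| ≤ ∑ t : Fin 4, |piQ t (m x) ^ 2 * W t| := Finset.abs_sum_le_sum_abs _ _
    _ ≤ ∑ t : Fin 4, |W t| := by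
        apply Finset.sum_le_sum
        intro t _
        rw [abs_mul, abs_pow]
        have h2 : |piQ t (m x)| ^ 2 ≤ 1 := by rw [sq_abs]; exact hsq t
        nlinarith [abs_nonneg (W t), sq_nonneg (|piQ t (m x)|)]
  have hfi : Integrable f μ := integrable_of_mixed hμ hfc hfb
  have hgz : ∫ x, (W t0 - f x) ∂μ = 0 := by
    have h1 : ∫ x, (W t0 - f x) ∂μ = W t0 - ∫ x, f x ∂μ := by
      rw [integral_sub (integrable_const _) hfi, integral_const]
      simp
    have h2 : 0 ≤ ∫ x, (W t0 - f x) ∂μ := by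
      apply integral_nonneg_of_ae
      filter_upwards [ae_sphere hμ] with x hx
      have := key x hx
      have hnn : 0 ≤ ∑ t : Fin 4, (W t0 - W t) * piQ t (m x) ^ 2 :=
        Finset.sum_nonneg fun t _ => mul_nonneg (by linarith [ht0 t]) (sq_nonneg _)
      show (0:ℝ) ≤ W t0 - f x
      linarith
    rw [h1] at h2 ⊢
    linarith [hint]
  have hae : ∀ᵐ x ∂μ, W t0 - f x = 0 :=
    (integral_eq_zero_iff_of_nonneg_ae (by
      filter_upwards [ae_sphere hμ] with x hx
      have := key x hx
      have hnn : 0 ≤ ∑ t : Fin 4, (W t0 - W t) * piQ t (m x) ^ 2 :=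
        Finset.sum_nonneg fun t _ => mul_nonneg (by linarith [ht0 t]) (sq_nonneg _)
      show (0:ℝ) ≤ W t0 - f x
      linarith) ((integrable_const _).sub hfi)).mp hgz
  filter_upwards [hae, ae_sphere hμ] with x hx hs
  have hzero : ∑ t : Fin 4, (W t0 - W t) * piQ t (m x) ^ 2 = 0 := by rw [key x hs, hx]
  have hterm := (Finset.sum_eq_zero_iff_of_nonneg
    (fun t _ => mul_nonneg (by linarith [ht0 t]) (sq_nonneg _))).mp hzero
  apply eq_pm_eQ _ _ (by rw [hmn, hs])
  intro t ht
  have := hterm t (Finset.mem_univ t)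
  have hlt : W t < W t0 := lt_of_le_of_ne (ht0 t) (fun hEq => ht (hW hEq))
  have : piQ t (m x) ^ 2 = 0 := by
    rcases mul_eq_zero.mp this with h' | h'
    · linarith
    · exact h'
  exact pow_eq_zero_iff two_ne_zero |>.mp this

lemma payoffM_eq_left {Y : Fin 4 → ℝ} {ν : Measure ℍ} {p₀ : ℍ}
    (hν : IsProbabilityMeasure ν) (hae : ∀ᵐ r ∂ν, r = p₀ ∨ r = -p₀) (μ' : Measure ℍ) :
    payoffM Y ν μ' = ∫ q, payoff Y p₀ q ∂μ' := by
  unfold payoffM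
  have h : ∀ᵐ p ∂ν, (∫ q, payoff Y p q ∂μ') = ∫ q, payoff Y p₀ q ∂μ' := by
    filter_upwards [hae] with p hp
    rcases hp with h' | h' <;> rw [h']
    exact integral_congr_ae (ae_of_all _ fun q => payoff_neg_left Y p₀ q)
  rw [integral_congr_ae h, integral_const]
  simp

lemma payoffM_eq_right {X : Fin 4 → ℝ} {μ : Measure ℍ} {q₀ : ℍ}
    (hμ : IsProbabilityMeasure μ) (hae : ∀ᵐ q ∂μ, q = q₀ ∨ q = -q₀) (ν' : Measure ℍ) :
    payoffM X ν' μ = ∫ p, payoff X p q₀ ∂ν' := by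
  unfold payoffM
  have hinner : ∀ p, (∫ q, payoff X p q ∂μ) = payoff X p q₀ := by
    intro p
    have h : ∀ᵐ q ∂μ, payoff X p q = payoff X p q₀ := by
      filter_upwards [hae] with q hq
      rcases hq with h' | h' <;> rw [h']
      exact payoff_neg_right X p q₀
    rw [integral_congr_ae h, integral_const]
    simp
  simp_rw [hinner]

lemma payoff_eQ (X : Fin 4 → ℝ) (t0 : Fin 4) {p q : ℍ} (h : p * q = eQ t0) :
    payoff X p q = X t0 := by
  unfold payoff
  rw [h]
  fin_cases t0 <;> simp [Fin.sum_univ_four, piQ, eQ, qI, qJ, qK, Quaternion.re_one, Quaternion.imI_one, Quaternion.imJ_one, Quaternion.imK_one]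

lemma payoff_cont (X : Fin 4 → ℝ) (p : ℍ) : Continuous (fun q => payoff X p q) := by
  apply continuous_finset_sum
  exact fun t _ => ((cont_piQ_sq t p)).mul continuous_const

lemma dir₁ {X Y : Fin 4 → ℝ} (hYinj : Function.Injective Y) {ν μ : Measure ℍ}
    (hnash : IsNash X Y ν μ) {p₀ : ℍ} (hp₀ : ‖p₀‖ = 1)
    (hν : StratEquiv ν (Measure.dirac p₀)) :
    ∃ q : ℍ, ‖q‖ = 1 ∧ StratEquiv μ (Measure.dirac q) := by
  obtain ⟨hνm, hμm, _, hbr⟩ := hnash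
  have hae := ae_of_equiv_dirac hνm hp₀ hν
  obtain ⟨t0, ht0⟩ := Finite.exists_max Y
  have hp0 : p₀ ≠ 0 := fun h0 => by simp [h0] at hp₀
  set q0 : ℍ := p₀⁻¹ * eQ t0 with hq0
  have hq0n : ‖q0‖ = 1 := by rw [hq0, norm_mul, norm_inv, hp₀, norm_eQ]; norm_num
  have hpq : p₀ * q0 = eQ t0 := by rw [hq0, ← mul_assoc, mul_inv_cancel₀ hp0, one_mul]
  have hkey := hbr (Measure.dirac q0) (isMixed_dirac hq0n)
  rw [payoffM_eq_left hνm.1 hae, payoffM_eq_left hνm.1 hae, integral_dirac,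
    payoff_eQ Y t0 hpq] at hkey
  have hcore := core Y hYinj t0 ht0 hμm (fun q => p₀ * q)
    (continuous_const.mul continuous_id) (fun q => by rw [norm_mul, hp₀, one_mul]) hkey
  refine ⟨q0, hq0n, equiv_dirac_of_ae hμm.1 ?_⟩
  filter_upwards [hcore] with q hq
  rcases hq with h' | h'
  · left
    rw [← hpq] at h'
    exact mul_left_cancel₀ hp0 h'
  · right
    have h2 : p₀ * q = p₀ * (-q0) := by rw [mul_neg, hpq]; exact h'
    exact mul_left_cancel₀ hp0 h2

lemma dir₂ {X Y : Fin 4 → ℝ} (hXinj : Function.Injective X) {ν μ : Measure ℍ}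
    (hnash : IsNash X Y ν μ) {q₀ : ℍ} (hq₀ : ‖q₀‖ = 1)
    (hμe : StratEquiv μ (Measure.dirac q₀)) :
    ∃ p : ℍ, ‖p‖ = 1 ∧ StratEquiv ν (Measure.dirac p) := by
  obtain ⟨hνm, hμm, hbr, _⟩ := hnash
  have hae := ae_of_equiv_dirac hμm hq₀ hμe
  obtain ⟨t0, ht0⟩ := Finite.exists_max X
  have hq0 : q₀ ≠ 0 := fun h0 => by simp [h0] at hq₀
  set p0 : ℍ := eQ t0 * q₀⁻¹ with hp0def
  have hp0n : ‖p0‖ = 1 := by rw [hp0def, norm_mul, norm_inv, hq₀, norm_eQ]; norm_num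
  have hpq : p0 * q₀ = eQ t0 := by rw [hp0def, mul_assoc, inv_mul_cancel₀ hq0, mul_one]
  have hkey := hbr (Measure.dirac p0) (isMixed_dirac hp0n)
  rw [payoffM_eq_right hμm.1 hae, payoffM_eq_right hμm.1 hae, integral_dirac,
    payoff_eQ X t0 hpq] at hkey
  have hcore := core X hXinj t0 ht0 hνm (fun p => p * q₀)
    (continuous_id.mul continuous_const) (fun p => by rw [norm_mul, hq₀, mul_one]) hkey
  refine ⟨p0, hp0n, equiv_dirac_of_ae hνm.1 ?_⟩
  filter_upwards [hcore] with p hp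
  rcases hp with h' | h'
  · left
    rw [← hpq] at h'
    exact mul_right_cancel₀ hq0 h'
  · right
    have h2 : p * q₀ = (-p0) * q₀ := by rw [neg_mul, hpq]; exact h'
    exact mul_right_cancel₀ hq0 h2

/-- In a Nash equilibrium of a generic game, `ν` is equivalent to a Dirac
measure iff `μ` is. -/
theorem pure_iff_pure (X Y : Fin 4 → ℝ) (hG : Generic X Y)
    (ν μ : Measure ℍ) (hnash : IsNash X Y ν μ) :
    (∃ p : ℍ, ‖p‖ = 1 ∧ StratEquiv ν (Measure.dirac p)) ↔
      (∃ q : ℍ, ‖q‖ = 1 ∧ StratEquiv μ (Measure.dirac q)) := by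
  obtain ⟨hX, hY, -, -⟩ := hG
  constructor
  · rintro ⟨p, hp, hν'⟩
    exact dir₁ hY hnash hp hν'
  · rintro ⟨q, hq, hμ'⟩
    exact dir₂ hX hnash hq hμ'
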